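/- Let A be a commutative ring equipped with a ℂ-algebra structure, let I and J be ideals of A, let Λ, g ∈ A, let h_1,…,h_k and m_1,…,m_r be elements of A, and let q ≥ 1 be an integer. Assume: (i) every element of A lies in the ℂ-linear span of {h_i·m_j : 1 ≤ i ≤ k, 1 ≤ j ≤ r} plus I + (Λ) + J; (ii) for every j ∈ {1,…,r} and every integer l with 0 ≤ l < q, the element m_j·g^l lies in the ℂ-linear span of {m_1,…,m_r} plus J; (iii) g^q ∈ I + (Λ − g) + J. Then every element of A lies in the ℂ-linear span of {h_i·m_j : 1 ≤ i ≤ k, 1 ≤ j ≤ r} plus I + (Λ − g) + J; consequently the quotient A/(I + (Λ − g) + J) is spanned over ℂ by the classes of the products h_i·m_j, and its dimension as a ℂ-vector space is at most k·r. -/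

import Mathlib

/-- Multiplying an element of `span ℂ s ⊔ K` by `c` lands in `span ℂ (c * ·) '' s ⊔ K`. -/
lemma aux_mul_mem_span_sup {A : Type*} [CommRing A] [Algebra ℂ A]
    (c : A) (s : Set A) (K : Ideal A) (x : A)
    (hx : x ∈ Submodule.span ℂ s ⊔ K.restrictScalars ℂ) :
    c * x ∈ Submodule.span ℂ ((c * ·) '' s) ⊔ K.restrictScalars ℂ := by
  obtain ⟨u, hu, v, hv, rfl⟩ := Submodule.mem_sup.mp hx
  rw [mul_add]
  apply Submodule.add_mem
  · apply Submodule.mem_sup_left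
    have : c * u ∈ Submodule.map (LinearMap.mulLeft ℂ c) (Submodule.span ℂ s) :=
      Submodule.mem_map_of_mem hu
    rwa [Submodule.map_span] at this
  · apply Submodule.mem_sup_right
    rw [Submodule.restrictScalars_mem] at hv ⊢
    exact Ideal.mul_mem_left _ _ hv

/-- The algebraic core of Theorem 3.4 (upper bound
`A_e-codim(A_{F,g}(f)) ≤ A_e-codim(f)·μ(g)`): if a commutative ℂ-algebra `A` is
spanned by the products `h i * m j` together with `I + (Λ) + J`, the `m j * g^l`
(for `l < q`) lie in the ℂ-span of the `m j` plus `J`, and `g^q ∈ I + (Λ - g) + J`,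
then `A` is spanned by the products `h i * m j` together with `I + (Λ - g) + J`;
consequently the quotient `A ⧸ (I + (Λ - g) + J)` is spanned over ℂ by the classes
of the products, and its ℂ-dimension is at most `k * r`. -/
theorem augmentation_codim_upper_bound_core
    (A : Type*) [CommRing A] [Algebra ℂ A]
    (I J : Ideal A) (Λ g : A)
    (k r q : ℕ) (hq : 1 ≤ q)
    (h : Fin k → A) (m : Fin r → A)
    (h1 : ∀ a : A, a ∈ Submodule.span ℂ (Set.range fun ij : Fin k × Fin r => h ij.1 * m ij.2)
            ⊔ Submodule.restrictScalars ℂ (I + Ideal.span {Λ} + J))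
    (h2 : ∀ (j : Fin r) (l : ℕ), l < q →
      m j * g ^ l ∈ Submodule.span ℂ (Set.range m) ⊔ Submodule.restrictScalars ℂ J)
    (h3 : g ^ q ∈ I + Ideal.span {Λ - g} + J) :
    (∀ a : A, a ∈ Submodule.span ℂ (Set.range fun ij : Fin k × Fin r => h ij.1 * m ij.2)
        ⊔ Submodule.restrictScalars ℂ (I + Ideal.span {Λ - g} + J)) ∧
    (⊤ : Submodule ℂ (A ⧸ (I + Ideal.span {Λ - g} + J))) =
      Submodule.span ℂ (Set.range fun ij : Fin k × Fin r =>
        Ideal.Quotient.mk (I + Ideal.span {Λ - g} + J) (h ij.1 * m ij.2)) ∧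
    Module.rank ℂ (A ⧸ (I + Ideal.span {Λ - g} + J)) ≤ ((k * r : ℕ) : Cardinal) := by
  set K : Ideal A := I + Ideal.span {Λ - g} + J with hKdef
  set F : Fin k × Fin r → A := fun ij => h ij.1 * m ij.2 with hFdef
  set S : Submodule ℂ A := Submodule.span ℂ (Set.range F) with hSdef
  set P : Submodule ℂ A := S ⊔ K.restrictScalars ℂ with hPdef
  have hJK : J ≤ K := le_sup_right
  have hIK : I ≤ K := le_trans le_sup_left le_sup_left
  have hΛgK : Λ - g ∈ K :=
    le_sup_left (α := Ideal A)
      (le_sup_right (α := Ideal A) (Ideal.subset_span (Set.mem_singleton _)))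
  have hKP : ∀ x : A, x ∈ K → x ∈ P := fun x hx =>
    Submodule.mem_sup_right (by rwa [Submodule.restrictScalars_mem])
  -- the base case of the descent: multiples of `g ^ l` for `l ≥ q` are in `K`
  have base : ∀ (l : ℕ) (a : A), q ≤ l → g ^ l * a ∈ P := by
    intro l a hl
    apply hKP
    have : g ^ l * a = g ^ q * (g ^ (l - q) * a) := by
      rw [← mul_assoc, ← pow_add, Nat.add_sub_cancel' hl]
    rw [this]
    exact Ideal.mul_mem_right _ _ h3
  -- `g ^ l * S ⊆ P` for `l < q`
  have hS : ∀ (l : ℕ), l < q → ∀ s ∈ S, g ^ l * s ∈ P := by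
    intro l hl s hs
    have hs' : s ∈ Submodule.span ℂ (Set.range F) ⊔ K.restrictScalars ℂ :=
      Submodule.mem_sup_left hs
    have := aux_mul_mem_span_sup (g ^ l) (Set.range F) K s hs'
    refine (sup_le ?_ le_sup_right : Submodule.span ℂ ((g ^ l * ·) '' Set.range F)
      ⊔ K.restrictScalars ℂ ≤ P) this
    rw [Submodule.span_le]
    rintro _ ⟨_, ⟨ij, rfl⟩, rfl⟩
    have h2' := aux_mul_mem_span_sup (h ij.1) (Set.range m) J _ (h2 ij.2 l hl)
    have heq : g ^ l * F ij = h ij.1 * (m ij.2 * g ^ l) := by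
      simp only [hFdef]; ring
    show g ^ l * F ij ∈ P
    rw [heq]
    refine (sup_le ?_ ?_ : Submodule.span ℂ ((h ij.1 * ·) '' Set.range m)
      ⊔ J.restrictScalars ℂ ≤ P) h2'
    · rw [Submodule.span_le]
      rintro _ ⟨_, ⟨j', rfl⟩, rfl⟩
      exact Submodule.mem_sup_left (Submodule.subset_span ⟨(ij.1, j'), rfl⟩)
    · intro x hx
      exact hKP x (hJK (by rwa [Submodule.restrictScalars_mem] at hx))
  -- the descent
  have key : ∀ (n l : ℕ) (a : A), q ≤ l + n → g ^ l * a ∈ P := by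
    intro n
    induction n with
    | zero => intro l a hl; exact base l a (by simpa using hl)
    | succ n ih =>
      intro l a hl
      rcases le_or_gt q l with h' | h'
      · exact base l a h'
      · obtain ⟨s, hs, x, hx, rfl⟩ := Submodule.mem_sup.mp (h1 a)
        rw [Submodule.restrictScalars_mem, Submodule.add_eq_sup] at hx
        obtain ⟨y, hy, j, hj, rfl⟩ := Submodule.mem_sup.mp hx
        rw [Submodule.add_eq_sup] at hy
        obtain ⟨i, hi, t, ht, rfl⟩ := Submodule.mem_sup.mp hy
        obtain ⟨c, rfl⟩ := Ideal.mem_span_singleton'.mp ht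
        have hsplit : g ^ l * (s + (i + c * Λ + j)) =
            g ^ l * s + (g ^ l * i + (g ^ l * c * (Λ - g) + g ^ (l + 1) * c)
              + g ^ l * j) := by ring
        rw [hsplit]
        refine P.add_mem (hS l h' s hs) (P.add_mem (P.add_mem ?_ (P.add_mem ?_ ?_)) ?_)
        · exact hKP _ (hIK (Ideal.mul_mem_left _ _ hi))
        · exact hKP _ (Ideal.mul_mem_left _ _ hΛgK)
        · exact ih (l + 1) c (by omega)
        · exact hKP _ (hJK (Ideal.mul_mem_left _ _ hj))
  have part1 : ∀ a : A, a ∈ P := by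
    intro a
    have := key q 0 a (by omega)
    simpa using this
  refine ⟨part1, ?_⟩
  -- images in the quotient
  have hspan : (⊤ : Submodule ℂ (A ⧸ K)) =
      Submodule.span ℂ (Set.range fun ij : Fin k × Fin r =>
        Ideal.Quotient.mk K (h ij.1 * m ij.2)) := by
    refine (Submodule.eq_top_iff'.mpr ?_).symm
    intro b
    obtain ⟨a, rfl⟩ := Ideal.Quotient.mk_surjective b
    obtain ⟨s, hs, x, hx, rfl⟩ := Submodule.mem_sup.mp (part1 a)
    rw [Submodule.restrictScalars_mem] at hx
    rw [map_add, Ideal.Quotient.eq_zero_iff_mem.mpr hx, add_zero]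
    have : Ideal.Quotient.mk K s ∈ Submodule.map
        (Ideal.Quotient.mkₐ ℂ K).toLinearMap (Submodule.span ℂ (Set.range F)) :=
      Submodule.mem_map_of_mem hs
    rw [Submodule.map_span, ← Set.range_comp] at this
    convert this using 3
    all_goals rfl
  refine ⟨hspan, ?_⟩
  have h5 := rank_span_le (R := ℂ)
    (s := Set.range fun ij : Fin k × Fin r =>
      Ideal.Quotient.mk K (h ij.1 * m ij.2))
  rw [← hspan, rank_top] at h5
  refine h5.trans ?_
  have h6 := Cardinal.mk_range_le_lift
    (f := fun ij : Fin k × Fin r => Ideal.Quotient.mk K (h ij.1 * m ij.2))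
  simpa using h6
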